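/- arXiv:2003.00292 — 2 statements merged into one kernel-verified Lean document; each statement's English description precedes it below -/
import Mathlib

section
/- Let U ⊆ ℝⁿ be nonempty and closed, let ψ : ℝⁿ → ℝ be differentiable with L-Lipschitz gradient (L > 0), and let 0 < γ ≤ 1/L. Then for every u ∈ ℝⁿ and every point t ∈ U attaining the distance from u − γ∇ψ(u) to U (i.e., ‖(u − γ∇ψ(u)) − t‖ = dist_U(u − γ∇ψ(u))), one has ψ(t) ≤ φ_γ(u). -/
open Set Metric

lemma descent_aux
    {E : Type*} [NormedAddCommGroup E] [InnerProductSpace ℝ E] [CompleteSpace E]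
    (ψ : E → ℝ) (ψ' : E → E)
    (hψ : ∀ x, HasGradientAt ψ (ψ' x) x)
    (L : ℝ) (hL : 0 ≤ L)
    (hlip : ∀ x w, ‖ψ' x - ψ' w‖ ≤ L * ‖x - w‖)
    (u t : E) :
    ψ t ≤ ψ u + inner ℝ (ψ' u) (t - u) + L / 2 * ‖t - u‖ ^ 2 := by
  set d : E := t - u with hd
  set f : ℝ → ℝ := fun s => ψ (u + s • d) - s * inner ℝ (ψ' u) d - ψ u with hf
  have hline : ∀ s : ℝ, HasDerivAt (fun s : ℝ => u + s • d) d s := by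
    intro s
    simpa using ((hasDerivAt_id s).smul_const d).const_add u
  have hf' : ∀ s : ℝ, HasDerivAt f
      ((inner ℝ (ψ' (u + s • d)) d : ℝ) - inner ℝ (ψ' u) d) s := by
    intro s
    have h1 : HasDerivAt (fun s : ℝ => ψ (u + s • d))
        ((inner ℝ (ψ' (u + s • d)) d : ℝ)) s := by
      have := (hψ (u + s • d)).hasFDerivAt.comp_hasDerivAt s (hline s)
      exact this
    have h2 : HasDerivAt (fun s : ℝ => s * inner ℝ (ψ' u) d)
        ((inner ℝ (ψ' u) d : ℝ)) s := by
      simpa using (hasDerivAt_id s).mul_const (inner ℝ (ψ' u) d : ℝ)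
    exact (h1.sub h2).sub_const (ψ u)
  have hfc : ContinuousOn f (Icc (0:ℝ) 1) := fun s _ => ((hf' s).continuousAt).continuousWithinAt
  have hfd : ∀ s ∈ Ico (0:ℝ) 1, HasDerivWithinAt f
      ((inner ℝ (ψ' (u + s • d)) d : ℝ) - inner ℝ (ψ' u) d) (Ici s) s :=
    fun s _ => (hf' s).hasDerivWithinAt
  have h0 : ‖f 0‖ ≤ L * ‖d‖ ^ 2 * (0:ℝ) ^ 2 / 2 := by simp [hf]
  have hB : ∀ s : ℝ, HasDerivAt (fun s : ℝ => L * ‖d‖ ^ 2 * s ^ 2 / 2) (L * ‖d‖ ^ 2 * s) s := by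
    intro s
    have := ((hasDerivAt_pow 2 s).const_mul (L * ‖d‖ ^ 2)).div_const 2
    refine this.congr_deriv ?_
    rw [show (2:ℕ) - 1 = 1 from rfl]
    ring
  have bound : ∀ s ∈ Ico (0:ℝ) 1,
      ‖(inner ℝ (ψ' (u + s • d)) d : ℝ) - inner ℝ (ψ' u) d‖ ≤ L * ‖d‖ ^ 2 * s := by
    intro s hs
    have h1 : |(inner ℝ (ψ' (u + s • d)) d : ℝ) - inner ℝ (ψ' u) d|
        ≤ ‖ψ' (u + s • d) - ψ' u‖ * ‖d‖ := by
      rw [← inner_sub_left]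
      exact abs_real_inner_le_norm _ _
    have h2 : ‖ψ' (u + s • d) - ψ' u‖ ≤ L * (s * ‖d‖) := by
      have := hlip (u + s • d) u
      simpa [norm_smul, abs_of_nonneg hs.1] using this
    calc ‖(inner ℝ (ψ' (u + s • d)) d : ℝ) - inner ℝ (ψ' u) d‖
        ≤ ‖ψ' (u + s • d) - ψ' u‖ * ‖d‖ := h1
      _ ≤ L * (s * ‖d‖) * ‖d‖ :=
          mul_le_mul_of_nonneg_right h2 (norm_nonneg _)
      _ = L * ‖d‖ ^ 2 * s := by ring
  have key : ∀ x ∈ Icc (0:ℝ) 1, ‖f x‖ ≤ L * ‖d‖ ^ 2 * x ^ 2 / 2 := fun x hx =>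
    image_norm_le_of_norm_deriv_right_le_deriv_boundary hfc hfd h0 hB bound hx
  have h1 := key 1 (by norm_num)
  have hft : f 1 = ψ t - inner ℝ (ψ' u) d - ψ u := by simp [hf, hd]
  have := (abs_le.mp (by simpa [Real.norm_eq_abs] using h1)).2
  rw [hft] at this
  nlinarith [this]


/-- if `∇ψ` is `L`-Lipschitz and `0 < γ ≤ 1/L`, then for every
`u` and every point `t ∈ U` attaining the distance from `u − γ∇ψ(u)` to `U`,
one has `ψ(t) ≤ φ_γ(u)`. -/
theorem psi_proj_le_fbe
    (n : ℕ) (hn : 0 < n)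
    (U : Set (EuclideanSpace ℝ (Fin n))) (hU : U.Nonempty)
    (hUclosed : IsClosed U)
    (ψ : EuclideanSpace ℝ (Fin n) → ℝ)
    (ψ' : EuclideanSpace ℝ (Fin n) → EuclideanSpace ℝ (Fin n))
    (hψ : ∀ x, HasGradientAt ψ (ψ' x) x)
    (L : ℝ) (hL : 0 < L)
    (hlip : ∀ x w, ‖ψ' x - ψ' w‖ ≤ L * ‖x - w‖)
    (γ : ℝ) (hγ : 0 < γ) (hγL : γ ≤ 1 / L) :
    ∀ u : EuclideanSpace ℝ (Fin n), ∀ t ∈ U,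
      ‖(u - γ • ψ' u) - t‖ = Metric.infDist (u - γ • ψ' u) U →
      ψ t ≤ ψ u - (γ / 2) * ‖ψ' u‖ ^ 2
          + (1 / (2 * γ)) * (Metric.infDist (u - γ • ψ' u) U) ^ 2 := by
  intro u t _ hdist
  have hdesc := descent_aux ψ ψ' hψ L hL.le hlip u t
  have hLγ : L ≤ 1 / γ := by
    rw [le_div_iff₀ hγ]
    calc L * γ ≤ L * (1 / L) := by
          exact mul_le_mul_of_nonneg_left hγL hL.le
      _ = 1 := by field_simp
  rw [← hdist]
  have hexp : ‖(u - γ • ψ' u) - t‖ ^ 2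
      = ‖t - u‖ ^ 2 + 2 * γ * inner ℝ (ψ' u) (t - u) + γ ^ 2 * ‖ψ' u‖ ^ 2 := by
    have : (u - γ • ψ' u) - t = -((t - u) + γ • ψ' u) := by abel
    rw [this, norm_neg, norm_add_sq_real]
    rw [real_inner_smul_right, real_inner_comm, norm_smul]
    simp [abs_of_nonneg hγ.le]
    ring
  rw [hexp]
  have h1 : ψ t ≤ ψ u + inner ℝ (ψ' u) (t - u) + 1 / (2 * γ) * ‖t - u‖ ^ 2 := by
    refine hdesc.trans ?_
    have : L / 2 * ‖t - u‖ ^ 2 ≤ 1 / (2 * γ) * ‖t - u‖ ^ 2 := by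
      apply mul_le_mul_of_nonneg_right _ (sq_nonneg _)
      have hLg1 : γ * L ≤ 1 := (le_div_iff₀ hL).mp hγL
      rw [div_le_div_iff₀ (by norm_num) (by positivity)]
      nlinarith
    linarith
  have hγne : γ ≠ 0 := hγ.ne'
  have : (1 / (2 * γ)) * (‖t - u‖ ^ 2 + 2 * γ * inner ℝ (ψ' u) (t - u) + γ ^ 2 * ‖ψ' u‖ ^ 2)
      = 1 / (2 * γ) * ‖t - u‖ ^ 2 + inner ℝ (ψ' u) (t - u) + γ / 2 * ‖ψ' u‖ ^ 2 := by
    field_simp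
  rw [this]
  linarith
end

section
/- Let U ⊆ ℝⁿ be nonempty and closed, let ψ : ℝⁿ → ℝ be differentiable with L-Lipschitz gradient (L > 0), and let 0 < γ ≤ 1/L. Then the infimum of the forward-backward envelope over ℝⁿ equals the infimum of ψ over U: inf_{u ∈ ℝⁿ} φ_γ(u) = inf_{u ∈ U} ψ(u) (as an equality in the extended reals ℝ ∪ {−∞}). In other words, the forward-backward envelope is a merit function sharing its minimum value with the constrained problem min_{u ∈ U} ψ(u). -/
open RealInnerProductSpace

/-- Descent lemma: if the gradient of `ψ` is `L`-Lipschitz, then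
`ψ v ≤ ψ u + ⟪∇ψ u, v - u⟫ + L/2 ‖v - u‖²`. -/
lemma descent_lemma {E : Type*} [NormedAddCommGroup E] [InnerProductSpace ℝ E]
    [CompleteSpace E]
    (ψ : E → ℝ) (ψ' : E → E) (hψ : ∀ x, HasGradientAt ψ (ψ' x) x)
    (L : ℝ) (hlip : ∀ x w, ‖ψ' x - ψ' w‖ ≤ L * ‖x - w‖)
    (u v : E) : ψ v ≤ ψ u + ⟪ψ' u, v - u⟫ + L / 2 * ‖v - u‖ ^ 2 := by
  set d := v - u with hd
  have hderiv : ∀ t : ℝ, HasDerivAt (fun t : ℝ => ψ (u + t • d))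
      ⟪ψ' (u + t • d), d⟫ t := by
    intro t
    have hc : HasDerivAt (fun t : ℝ => u + t • d) d t := by
      simpa using ((hasDerivAt_id t).smul_const d).const_add u
    have := ((hψ (u + t • d)).hasFDerivAt).comp_hasDerivAt t hc
    simp at this
    exact this
  set f : ℝ → ℝ := fun t => ψ (u + t • d) - t * ⟪ψ' u, d⟫ - L / 2 * t ^ 2 * ‖d‖ ^ 2
    with hf
  have hfderiv : ∀ t : ℝ, HasDerivAt f
      (⟪ψ' (u + t • d), d⟫ - ⟪ψ' u, d⟫ - L * t * ‖d‖ ^ 2) t := by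
    intro t
    have h1 : HasDerivAt (fun t : ℝ => t * ⟪ψ' u, d⟫) ⟪ψ' u, d⟫ t := by
      simpa using (hasDerivAt_id t).mul_const ⟪ψ' u, d⟫
    have h2 : HasDerivAt (fun t : ℝ => L / 2 * t ^ 2 * ‖d‖ ^ 2)
        (L * t * ‖d‖ ^ 2) t := by
      have := ((hasDerivAt_pow 2 t).const_mul (L / 2)).mul_const (‖d‖ ^ 2)
      refine this.congr_deriv ?_
      rw [show (2:ℕ) - 1 = 1 from rfl]
      push_cast
      ring
    have := ((hderiv t).sub h1).sub h2
    exact this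
  have hanti : AntitoneOn f (Set.Icc 0 1) := by
    apply antitoneOn_of_deriv_nonpos (convex_Icc 0 1)
    · have : Differentiable ℝ f := fun t => (hfderiv t).differentiableAt
      exact this.continuous.continuousOn
    · intro t _
      exact (hfderiv t).differentiableAt.differentiableWithinAt
    · intro t ht
      rw [(hfderiv t).deriv]
      rw [interior_Icc] at ht
      have h1 : ⟪ψ' (u + t • d), d⟫ - ⟪ψ' u, d⟫ ≤ L * t * ‖d‖ ^ 2 := by
        have := real_inner_le_norm (ψ' (u + t • d) - ψ' u) d
        have h2 := hlip (u + t • d) u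
        have h3 : ‖u + t • d - u‖ = t * ‖d‖ := by
          simp [norm_smul, abs_of_pos ht.1]
        rw [inner_sub_left] at this
        rw [h3] at h2
        nlinarith [mul_le_mul_of_nonneg_right h2 (norm_nonneg d), norm_nonneg d]
      linarith
  have := hanti (Set.left_mem_Icc.2 zero_le_one) (Set.right_mem_Icc.2 zero_le_one)
      zero_le_one
  simp only [hf] at this
  simp at this
  have hv : u + d = v := by rw [hd]; abel
  rw [hv] at this
  linarith

/-- if `∇ψ` is `L`-Lipschitz and `0 < γ ≤ 1/L`, then the infimum
of the forward-backward envelope over `ℝⁿ` equals the infimum of `ψ` over `U`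
(as an equality in the extended reals). -/
theorem fbe_inf_eq_psi_inf
    (n : ℕ) (hn : 0 < n)
    (U : Set (EuclideanSpace ℝ (Fin n))) (hU : U.Nonempty)
    (hUclosed : IsClosed U)
    (ψ : EuclideanSpace ℝ (Fin n) → ℝ)
    (ψ' : EuclideanSpace ℝ (Fin n) → EuclideanSpace ℝ (Fin n))
    (hψ : ∀ x, HasGradientAt ψ (ψ' x) x)
    (L : ℝ) (hL : 0 < L)
    (hlip : ∀ x w, ‖ψ' x - ψ' w‖ ≤ L * ‖x - w‖)
    (γ : ℝ) (hγ : 0 < γ) (hγL : γ ≤ 1 / L) :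
    (⨅ u : EuclideanSpace ℝ (Fin n),
        ((ψ u - (γ / 2) * ‖ψ' u‖ ^ 2
          + (1 / (2 * γ)) * (Metric.infDist (u - γ • ψ' u) U) ^ 2 : ℝ) : EReal))
      = ⨅ u ∈ U, ((ψ u : ℝ) : EReal) := by
  apply le_antisymm
  · -- inf φ ≤ inf_U ψ : for v ∈ U, φ(v) ≤ ψ(v)
    refine le_iInf₂ fun v hv => ?_
    refine iInf_le_of_le v ?_
    apply EReal.coe_le_coe_iff.2
    have h1 : Metric.infDist (v - γ • ψ' v) U ≤ γ * ‖ψ' v‖ := by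
      have := Metric.infDist_le_dist_of_mem (x := v - γ • ψ' v) hv
      calc Metric.infDist (v - γ • ψ' v) U ≤ dist (v - γ • ψ' v) v := this
        _ = γ * ‖ψ' v‖ := by
            rw [dist_eq_norm]
            simp [norm_smul, abs_of_pos hγ]
    have h0 : (0:ℝ) ≤ Metric.infDist (v - γ • ψ' v) U := Metric.infDist_nonneg
    have h2 : (1 / (2 * γ)) * (Metric.infDist (v - γ • ψ' v) U) ^ 2
        ≤ (γ / 2) * ‖ψ' v‖ ^ 2 := by
      have hsq : (Metric.infDist (v - γ • ψ' v) U) ^ 2 ≤ (γ * ‖ψ' v‖) ^ 2 := by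
        nlinarith
      have : (1 / (2 * γ)) * (Metric.infDist (v - γ • ψ' v) U) ^ 2
          ≤ (1 / (2 * γ)) * (γ * ‖ψ' v‖) ^ 2 := by
        apply mul_le_mul_of_nonneg_left hsq
        positivity
      calc (1 / (2 * γ)) * (Metric.infDist (v - γ • ψ' v) U) ^ 2
          ≤ (1 / (2 * γ)) * (γ * ‖ψ' v‖) ^ 2 := this
        _ = (γ / 2) * ‖ψ' v‖ ^ 2 := by field_simp
    linarith
  · -- inf_U ψ ≤ inf φ
    refine le_iInf fun u => ?_
    obtain ⟨v, hvU, hvd⟩ := hUclosed.exists_infDist_eq_dist hU (u - γ • ψ' u)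
    refine le_trans (iInf₂_le v hvU) ?_
    apply EReal.coe_le_coe_iff.2
    have hdesc := descent_lemma ψ ψ' hψ L hlip u v
    have hexp : ‖u - γ • ψ' u - v‖ ^ 2
        = ‖u - v‖ ^ 2 - 2 * γ * ⟪ψ' u, u - v⟫ + γ ^ 2 * ‖ψ' u‖ ^ 2 := by
      have : u - γ • ψ' u - v = (u - v) - γ • ψ' u := by abel
      rw [this, norm_sub_sq_real, real_inner_smul_right, norm_smul,
        real_inner_comm]
      simp [abs_of_pos hγ]
      ring
    rw [hvd, dist_eq_norm]
    have hinner : ⟪ψ' u, v - u⟫ = - ⟪ψ' u, u - v⟫ := by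
      rw [← inner_neg_right]; congr 1; abel
    have hLγ : L * γ ≤ 1 := by
      rw [le_div_iff₀ hL] at hγL
      linarith
    have hsq : L / 2 * ‖v - u‖ ^ 2 ≤ 1 / (2 * γ) * ‖u - v‖ ^ 2 := by
      rw [show ‖v - u‖ = ‖u - v‖ by rw [← norm_neg]; congr 1; abel]
      have : L / 2 ≤ 1 / (2 * γ) := by
        rw [div_le_div_iff₀ (by norm_num) (by positivity)]
        nlinarith [hLγ]
      nlinarith [sq_nonneg ‖u - v‖]
    rw [hexp]
    rw [hinner] at hdesc
    have hγne : γ ≠ 0 := ne_of_gt hγ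
    have key : 1 / (2 * γ) * (‖u - v‖ ^ 2 - 2 * γ * ⟪ψ' u, u - v⟫ + γ ^ 2 * ‖ψ' u‖ ^ 2)
        = 1 / (2 * γ) * ‖u - v‖ ^ 2 - ⟪ψ' u, u - v⟫ + γ / 2 * ‖ψ' u‖ ^ 2 := by
      field_simp
    rw [key]
    linarith
end
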